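/- Let Q be a projection in B(H) and V a von Neumann algebra on H. If [UQU*, Q] = 0 for every unitary U ∈ V', then Q ∈ V. -/

import Mathlib

open NormedSpace Filter Topology

/-- Half-step: commuting idempotents at distance `< 1` satisfy `P * Q = P`. -/
lemma idem_half {A : Type*} [NormedRing A] {P Q : A}
    (hP : IsIdempotentElem P) (hQ : IsIdempotentElem Q) (hc : Commute P Q)
    (hn : ‖P - Q‖ < 1) : P * Q = P := by
  set R := P - P * Q with hR
  have key : (P - Q) * R = R := by
    have h1 : Q * P = P * Q := hc.symm.eq
    have h2 : P * P = P := hP.eq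
    have h3 : Q * Q = Q := hQ.eq
    rw [hR]
    calc (P - Q) * (P - P * Q)
        = P * P - P * P * Q - (Q * P) + (Q * P) * Q := by noncomm_ring
      _ = P - P * Q - P * Q + P * (Q * Q) := by
          rw [h2, h1, mul_assoc P Q Q]
      _ = P - P * Q := by rw [h3]; abel
  have hR0 : R = 0 := by
    by_contra hne
    have hpos : 0 < ‖R‖ := norm_pos_iff.mpr hne
    have : ‖R‖ ≤ ‖P - Q‖ * ‖R‖ := by
      calc ‖R‖ = ‖(P - Q) * R‖ := by rw [key]
        _ ≤ ‖P - Q‖ * ‖R‖ := norm_mul_le _ _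
    nlinarith
  exact (sub_eq_zero.mp hR0).symm

/-- Commuting idempotents at distance `< 1` are equal. -/
lemma idem_close_eq {A : Type*} [NormedRing A] {P Q : A}
    (hP : IsIdempotentElem P) (hQ : IsIdempotentElem Q) (hc : Commute P Q)
    (hn : ‖P - Q‖ < 1) : P = Q := by
  have h1 : P * Q = P := idem_half hP hQ hc hn
  have h2 : Q * P = Q := by
    apply idem_half hQ hP hc.symm
    rwa [norm_sub_rev]
  rw [← h1, ← hc.symm.eq, h2]

/-- Let Q be a projection in B(H) and V a von Neumann algebra on H.  If UQU* commutes
with Q for every unitary U in the commutant V', then Q ∈ V. -/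
theorem stmt_15 {H : Type*} [NormedAddCommGroup H] [InnerProductSpace ℂ H] [CompleteSpace H]
    (V : VonNeumannAlgebra H)
    (Q : H →L[ℂ] H) (hQidem : IsIdempotentElem Q) (hQsa : IsSelfAdjoint Q)
    (hcomm : ∀ U : H →L[ℂ] H, U ∈ unitary (H →L[ℂ] H) → U ∈ V.commutant →
      Commute (U * Q * star U) Q) :
    Q ∈ V := by
  rw [← V.commutant_commutant, VonNeumannAlgebra.mem_commutant_iff]
  -- It suffices to commute with self-adjoint elements of the commutant.
  suffices key : ∀ h ∈ V.commutant, IsSelfAdjoint h → h * Q = Q * h by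
    intro T hT
    have hTs : star T ∈ V.commutant := star_mem hT
    have ha : (T + star T) * Q = Q * (T + star T) :=
      key _ (add_mem hT hTs) (IsSelfAdjoint.add_star_self T)
    have hbsa : IsSelfAdjoint (Complex.I • (T - star T)) := by
      rw [IsSelfAdjoint, star_smul, star_sub, star_star, Complex.star_def, Complex.conj_I,
        neg_smul, smul_sub, smul_sub, neg_sub]
    have hb := key _ (V.commutant.toStarSubalgebra.smul_mem (sub_mem hT hTs) Complex.I) hbsa
    rw [smul_mul_assoc, mul_smul_comm] at hb
    have hb' : (T - star T) * Q = Q * (T - star T) :=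
      smul_right_injective _ Complex.I_ne_zero hb
    have h2 : (2 : ℂ) • (T * Q) = (2 : ℂ) • (Q * T) := by
      have := congrArg₂ (· + ·) ha hb'
      simp only [add_mul, sub_mul, mul_add, mul_sub] at this
      rw [two_smul, two_smul]
      abel_nf
      abel_nf at this
      linear_combination (norm := abel) this
    exact smul_right_injective _ two_ne_zero h2
  intro h hmem hsa
  set A : H →L[ℂ] H := Complex.I • h with hA
  have hAskew : star A = -A := by
    rw [hA, star_smul, Complex.star_def, Complex.conj_I, hsa.star_eq, neg_smul]
  -- the exponentials
  let +nondep : NormedAlgebra ℚ (H →L[ℂ] H) := .restrictScalars ℚ ℂ (H →L[ℂ] H)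
  set E : ℂ → (H →L[ℂ] H) := fun t => exp (t • A) with hE
  have hEunit : ∀ t : ℝ, E (t : ℂ) ∈ unitary (H →L[ℂ] H) := by
    intro t
    apply exp_mem_unitary_of_mem_skewAdjoint
    rw [skewAdjoint.mem_iff, star_smul, Complex.star_def, Complex.conj_ofReal, hAskew,
      smul_neg]
  have hEcomm : ∀ t : ℂ, E t ∈ V.commutant := by
    intro t
    rw [VonNeumannAlgebra.mem_commutant_iff]
    intro g hg
    have : Commute g h := VonNeumannAlgebra.mem_commutant_iff.mp hmem g hg
    exact (((this.smul_right Complex.I).smul_right t).exp_right).eq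
  -- conjugated projections
  set P : ℝ → (H →L[ℂ] H) := fun t => E t * Q * star (E t) with hP
  have hstarmul : ∀ t : ℝ, star (E t) * E t = 1 := fun t =>
    (Unitary.mem_iff.mp (hEunit t)).1
  have hPidem : ∀ t : ℝ, IsIdempotentElem (P t) := by
    intro t
    have : P t * P t = E t * Q * (star (E t) * E t) * Q * star (E t) := by
      simp only [hP, mul_assoc]
    rw [IsIdempotentElem, this, hstarmul t, mul_one, mul_assoc (E t) Q Q, hQidem.eq]
  -- continuity and eventual equality
  have hEcont : Continuous fun t : ℝ => E (t : ℂ) := by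
    exact exp_continuous.comp ((Complex.continuous_ofReal.smul continuous_const))
  have hPcont : Continuous P := by
    exact (hEcont.mul continuous_const).mul hEcont.star
  have hP0 : P 0 = Q := by
    simp [hP, hE, exp_zero]
  have hev : ∀ᶠ t in 𝓝 (0 : ℝ), ‖P t - Q‖ < 1 := by
    have h1 : Tendsto (fun t => ‖P t - Q‖) (𝓝 0) (𝓝 ‖P 0 - Q‖) :=
      ((hPcont.sub continuous_const).norm).continuousAt
    rw [hP0, sub_self, norm_zero] at h1
    exact h1.eventually_lt_const one_pos
  have heq : (fun t : ℝ => E ↑t * Q) =ᶠ[𝓝 (0 : ℝ)] fun t : ℝ => Q * E ↑t := by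
    filter_upwards [hev] with t ht
    have hPt : P t = Q := idem_close_eq (hPidem t) hQidem
      (hcomm (E t) (hEunit t) (hEcomm t)) ht
    have := congrArg (· * E (t : ℂ)) hPt
    simp only [hP] at this
    simpa only [mul_assoc, hstarmul t, mul_one] using this
  -- differentiate at 0
  have hd : HasDerivAt (fun t : ℝ => E (t : ℂ)) A 0 := by
    have h1 : HasDerivAt (fun u : ℂ => exp (u • A)) A ((0 : ℝ) : ℂ) := by
      have := hasDerivAt_exp_smul_const' (𝕂 := ℂ) A ((0 : ℝ) : ℂ)
      simpa using this
    have h2 : HasDerivAt (fun y : ℝ => (y : ℂ)) 1 0 := Complex.ofRealCLM.hasDerivAt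
    have h3 := h1.scomp (0:ℝ) h2
    rw [one_smul] at h3
    exact h3
  have hdf : HasDerivAt (fun t : ℝ => E (t : ℂ) * Q) (A * Q) 0 := hd.mul_const Q
  have hdg : HasDerivAt (fun t : ℝ => Q * E (t : ℂ)) (Q * A) 0 := hd.const_mul Q
  have hdf' : HasDerivAt (fun t : ℝ => Q * E (t : ℂ)) (A * Q) 0 :=
    hdf.congr_of_eventuallyEq heq.symm
  have hAQ : A * Q = Q * A := hdf'.unique hdg
  rw [hA, smul_mul_assoc, mul_smul_comm] at hAQ
  exact smul_right_injective _ Complex.I_ne_zero hAQ
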